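/- arXiv:2507.22833 — 2 statements merged into one kernel-verified Lean document; each statement's English description precedes it below -/
import Mathlib

section
/- Let K be a real compact nc convex set and x ∈ K. Then x is maximal in K if and only if x + i0 is maximal in the complexification K_c. -/
open Matrix Filter Topology
open scoped RealInnerProductSpace ComplexOrder

noncomputable section

namespace NCC

/-! ## Matrix operations over a real module -/

def lmul {E : Type*} [AddCommMonoid E] [Module ℝ E] {m n p : ℕ}
    (a : Matrix (Fin m) (Fin n) ℝ) (x : Matrix (Fin n) (Fin p) E) :
    Matrix (Fin m) (Fin p) E :=
  Matrix.of fun i j => ∑ k, a i k • x k j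

def rmulE {E : Type*} [AddCommMonoid E] [Module ℝ E] {m n p : ℕ}
    (x : Matrix (Fin m) (Fin n) E) (a : Matrix (Fin n) (Fin p) ℝ) :
    Matrix (Fin m) (Fin p) E :=
  Matrix.of fun i j => ∑ k, a k j • x i k

/-- The compression `αᵀ x α` of `x ∈ M_n(E)` by `α ∈ M_{n,m}(ℝ)`. -/
def compress {E : Type*} [AddCommMonoid E] [Module ℝ E] {n m : ℕ}
    (α : Matrix (Fin n) (Fin m) ℝ) (x : Matrix (Fin n) (Fin n) E) :
    Matrix (Fin m) (Fin m) E :=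
  lmul α.transpose (rmulE x α)

/-- A real isometry matrix: `αᵀ α = 1`. -/
def IsIsometry {n m : ℕ} (α : Matrix (Fin n) (Fin m) ℝ) : Prop :=
  α.transpose * α = 1

/-- The direct sum `x ⊕ y` of matrices over `E`. -/
def dSum {E : Type*} [AddCommMonoid E] [Module ℝ E] {n m : ℕ}
    (x : Matrix (Fin n) (Fin n) E) (y : Matrix (Fin m) (Fin m) E) :
    Matrix (Fin (n + m)) (Fin (n + m)) E :=
  Matrix.reindex finSumFinEquiv finSumFinEquiv (Matrix.fromBlocks x 0 0 y)

/-- A real scalar matrix `p` commutes with a matrix `x` over `E`. -/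
def RComm {E : Type*} [AddCommMonoid E] [Module ℝ E] {n : ℕ}
    (p : Matrix (Fin n) (Fin n) ℝ) (x : Matrix (Fin n) (Fin n) E) : Prop :=
  lmul p x = rmulE x p

/-! ## Real nc convex sets -/

/-- A real nc convex set over the real operator space `E`, with (finite) matrix levels:
a graded family of sets closed under direct sums and isometric compressions. -/
structure NCConvexSet (E : Type*) [AddCommMonoid E] [Module ℝ E] where
  level : (n : ℕ) → Set (Matrix (Fin n) (Fin n) E)
  dSum_mem : ∀ {n m : ℕ} {x : Matrix (Fin n) (Fin n) E} {y : Matrix (Fin m) (Fin m) E},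
    x ∈ level n → y ∈ level m → dSum x y ∈ level (n + m)
  compress_mem : ∀ {n m : ℕ} (α : Matrix (Fin n) (Fin m) ℝ), IsIsometry α →
    ∀ {x : Matrix (Fin n) (Fin n) E}, x ∈ level n → compress α x ∈ level m

/-- Compactness of each level in the point-weak* topology (here: the given topology on `E`). -/
def NCConvexSet.IsCompactSet {E : Type*} [AddCommMonoid E] [Module ℝ E] [TopologicalSpace E]
    (K : NCConvexSet E) : Prop :=
  ∀ n, IsCompact (K.level n)

/-- The elements of `K` at level `m`. -/
abbrev NCConvexSet.Elem {E : Type*} [AddCommMonoid E] [Module ℝ E] (K : NCConvexSet E) (m : ℕ) :=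
  {x : Matrix (Fin m) (Fin m) E // x ∈ K.level m}

/-- `x` is maximal in `K` : every dilation of `x` is trivial. -/
def IsMaxIn {E : Type*} [AddCommMonoid E] [Module ℝ E] (K : NCConvexSet E) {n : ℕ}
    (x : Matrix (Fin n) (Fin n) E) : Prop :=
  ∀ {m : ℕ} (y : Matrix (Fin m) (Fin m) E) (α : Matrix (Fin m) (Fin n) ℝ),
    y ∈ K.level m → IsIsometry α → compress α y = x → RComm (α * α.transpose) y

/-- `x` is a pure point of `K`. -/
def IsPureIn {E : Type*} [AddCommMonoid E] [Module ℝ E] (K : NCConvexSet E) {n : ℕ}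
    (x : Matrix (Fin n) (Fin n) E) : Prop :=
  ∀ (N : ℕ) (d : Fin N → ℕ)
    (xs : ∀ i, Matrix (Fin (d i)) (Fin (d i)) E)
    (αs : ∀ i, Matrix (Fin (d i)) (Fin n) ℝ),
    (∀ i, xs i ∈ K.level (d i)) → (∀ i, αs i ≠ 0) →
    (∑ i, (αs i).transpose * αs i) = 1 →
    (∑ i, compress (αs i) (xs i)) = x →
    ∀ i, ∃ (c : ℝ) (β : Matrix (Fin (d i)) (Fin n) ℝ),
      0 < c ∧ IsIsometry β ∧ αs i = c • β ∧ compress β (xs i) = x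

/-- `x` is an extreme point of `K`. -/
def IsExtremeIn {E : Type*} [AddCommMonoid E] [Module ℝ E] (K : NCConvexSet E) {n : ℕ}
    (x : Matrix (Fin n) (Fin n) E) : Prop :=
  ∀ (N : ℕ) (d : Fin N → ℕ)
    (xs : ∀ i, Matrix (Fin (d i)) (Fin (d i)) E)
    (αs : ∀ i, Matrix (Fin (d i)) (Fin n) ℝ),
    (∀ i, xs i ∈ K.level (d i)) → (∀ i, αs i ≠ 0) →
    (∑ i, (αs i).transpose * αs i) = 1 →
    (∑ i, compress (αs i) (xs i)) = x →
    ∀ i, ∃ (c : ℝ) (β : Matrix (Fin (d i)) (Fin n) ℝ),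
      0 < c ∧ IsIsometry β ∧ αs i = c • β ∧ compress β (xs i) = x ∧
      RComm (β * β.transpose) (xs i)

/-! ## Complexification -/

/-- `c(x + iy) = [[x, -y], [y, x]]`. -/
def cMat {E : Type*} [AddCommGroup E] [Module ℝ E] {n : ℕ}
    (x y : Matrix (Fin n) (Fin n) E) : Matrix (Fin (n + n)) (Fin (n + n)) E :=
  Matrix.reindex finSumFinEquiv finSumFinEquiv (Matrix.fromBlocks x (-y) y x)

/-- A complex isometry matrix `a + ib` : `(a+ib)^*(a+ib) = 1`. -/
def IsCIsometry {n m : ℕ} (a b : Matrix (Fin n) (Fin m) ℝ) : Prop :=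
  a.transpose * a + b.transpose * b = 1 ∧ a.transpose * b - b.transpose * a = 0

/-- Complex compression `(a+ib)^* (x+iy) (a+ib)`, presented as a pair (real part, imaginary part). -/
def compressC {E : Type*} [AddCommGroup E] [Module ℝ E] {N m : ℕ}
    (a b : Matrix (Fin N) (Fin m) ℝ) (x y : Matrix (Fin N) (Fin N) E) :
    Matrix (Fin m) (Fin m) E × Matrix (Fin m) (Fin m) E :=
  (lmul a.transpose (rmulE x a - rmulE y b) + lmul b.transpose (rmulE y a + rmulE x b),
   lmul a.transpose (rmulE y a + rmulE x b) - lmul b.transpose (rmulE x a - rmulE y b))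

/-- The complex scalar matrix `pr + i·pim` commutes with `x + iy`. -/
def CCommC {E : Type*} [AddCommGroup E] [Module ℝ E] {N : ℕ}
    (pr pim : Matrix (Fin N) (Fin N) ℝ) (x y : Matrix (Fin N) (Fin N) E) : Prop :=
  (lmul pr x - lmul pim y = rmulE x pr - rmulE y pim) ∧
  (lmul pr y + lmul pim x = rmulE y pr + rmulE x pim)

/-- `x + iy ∈ K_c` is maximal with respect to dilations by complex isometries. -/
def IsCMaxInC {E : Type*} [AddCommGroup E] [Module ℝ E] (K : NCConvexSet E) {n : ℕ}
    (x y : Matrix (Fin n) (Fin n) E) : Prop :=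
  ∀ {m : ℕ} (z w : Matrix (Fin m) (Fin m) E) (a b : Matrix (Fin m) (Fin n) ℝ),
    cMat z w ∈ K.level (m + m) → IsCIsometry a b → compressC a b z w = (x, y) →
    CCommC (a * a.transpose + b * b.transpose) (b * a.transpose - a * b.transpose) z w

/-- `x + iy ∈ K_c` is maximal with respect to dilations by real isometries. -/
def IsRMaxInC {E : Type*} [AddCommGroup E] [Module ℝ E] (K : NCConvexSet E) {n : ℕ}
    (x y : Matrix (Fin n) (Fin n) E) : Prop :=
  ∀ {m : ℕ} (z w : Matrix (Fin m) (Fin m) E) (α : Matrix (Fin m) (Fin n) ℝ),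
    cMat z w ∈ K.level (m + m) → IsIsometry α → compressC α 0 z w = (x, y) →
    CCommC (α * α.transpose) 0 z w

/-- `x + iy` is a pure point of the complexification `K_c`. -/
def IsCPureInC {E : Type*} [AddCommGroup E] [Module ℝ E] (K : NCConvexSet E) {n : ℕ}
    (x y : Matrix (Fin n) (Fin n) E) : Prop :=
  ∀ (N : ℕ) (d : Fin N → ℕ)
    (xs ys : ∀ i, Matrix (Fin (d i)) (Fin (d i)) E)
    (as bs : ∀ i, Matrix (Fin (d i)) (Fin n) ℝ),
    (∀ i, cMat (xs i) (ys i) ∈ K.level (d i + d i)) →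
    (∀ i, ¬(as i = 0 ∧ bs i = 0)) →
    (∑ i, ((as i).transpose * as i + (bs i).transpose * bs i)) = 1 →
    (∑ i, ((as i).transpose * bs i - (bs i).transpose * as i)) = 0 →
    (∑ i, (compressC (as i) (bs i) (xs i) (ys i)).1) = x →
    (∑ i, (compressC (as i) (bs i) (xs i) (ys i)).2) = y →
    ∀ i, ∃ (c : ℝ) (βa βb : Matrix (Fin (d i)) (Fin n) ℝ),
      0 < c ∧ IsCIsometry βa βb ∧ as i = c • βa ∧ bs i = c • βb ∧
      compressC βa βb (xs i) (ys i) = (x, y)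

/-- `x + iy` is an extreme point of the complexification `K_c`. -/
def IsCExtremeInC {E : Type*} [AddCommGroup E] [Module ℝ E] (K : NCConvexSet E) {n : ℕ}
    (x y : Matrix (Fin n) (Fin n) E) : Prop :=
  ∀ (N : ℕ) (d : Fin N → ℕ)
    (xs ys : ∀ i, Matrix (Fin (d i)) (Fin (d i)) E)
    (as bs : ∀ i, Matrix (Fin (d i)) (Fin n) ℝ),
    (∀ i, cMat (xs i) (ys i) ∈ K.level (d i + d i)) →
    (∀ i, ¬(as i = 0 ∧ bs i = 0)) →
    (∑ i, ((as i).transpose * as i + (bs i).transpose * bs i)) = 1 →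
    (∑ i, ((as i).transpose * bs i - (bs i).transpose * as i)) = 0 →
    (∑ i, (compressC (as i) (bs i) (xs i) (ys i)).1) = x →
    (∑ i, (compressC (as i) (bs i) (xs i) (ys i)).2) = y →
    ∀ i, ∃ (c : ℝ) (βa βb : Matrix (Fin (d i)) (Fin n) ℝ),
      0 < c ∧ IsCIsometry βa βb ∧ as i = c • βa ∧ bs i = c • βb ∧
      compressC βa βb (xs i) (ys i) = (x, y) ∧
      CCommC (βa * βa.transpose + βb * βb.transpose)
        (βb * βa.transpose - βa * βb.transpose) (xs i) (ys i)

/-- `x` is complex-irreducible: every nonzero positive complex matrix commuting with `x`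
is a positive scalar multiple of the identity. -/
def CIrred {E : Type*} [AddCommGroup E] [Module ℝ E] {n : ℕ}
    (x : Matrix (Fin n) (Fin n) E) : Prop :=
  ∀ T : Matrix (Fin n) (Fin n) ℂ, T.PosSemidef → T ≠ 0 →
    RComm (T.map Complex.re) x → RComm (T.map Complex.im) x →
    ∃ c : ℝ, 0 < c ∧ T = (c : ℂ) • 1

/-- The closed nc convex hull of a graded set. -/
def closedNCHull {E' : Type*} [AddCommMonoid E'] [Module ℝ E'] [TopologicalSpace E']
    (X : ∀ m : ℕ, Set (Matrix (Fin m) (Fin m) E')) :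
    ∀ m : ℕ, Set (Matrix (Fin m) (Fin m) E') :=
  fun m => {z | ∀ L : NCConvexSet E', (∀ k, IsClosed (L.level k)) →
    (∀ k, X k ⊆ L.level k) → z ∈ L.level m}

/-- Bundled real topological vector space data (for existential statements). -/
structure RSpace where
  carrier : Type
  [grp : AddCommGroup carrier]
  [mod : Module ℝ carrier]
  [top : TopologicalSpace carrier]

attribute [instance] RSpace.grp RSpace.mod RSpace.top

end NCC
/-! ## NC functions -/

namespace NCC

/-- `1_n ⊗ U` : the amplification of a real scalar matrix. -/
def amp {n m k : ℕ} (U : Matrix (Fin m) (Fin k) ℝ) :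
    Matrix (Fin n × Fin m) (Fin n × Fin k) ℝ :=
  Matrix.of fun p q => if p.1 = q.1 then U p.2 q.2 else 0

/-- Direct sum of values of a (matrix-valued) nc function. -/
def dPair {n m k : ℕ} (A : Matrix (Fin n × Fin m) (Fin n × Fin m) ℝ)
    (B : Matrix (Fin n × Fin k) (Fin n × Fin k) ℝ) :
    Matrix (Fin n × Fin (m + k)) (Fin n × Fin (m + k)) ℝ :=
  Matrix.of fun p q =>
    Sum.elim
      (fun a => Sum.elim (fun b => A (p.1, a) (q.1, b)) (fun _ => (0 : ℝ))
        (finSumFinEquiv.symm q.2))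
      (fun a => Sum.elim (fun _ => (0 : ℝ)) (fun b => B (p.1, a) (q.1, b))
        (finSumFinEquiv.symm q.2))
      (finSumFinEquiv.symm p.2)

/-- A (bounded) nc function in `M_n(B(K))` : graded, unitarily equivariant,
respecting direct sums. -/
structure NCFun {E : Type*} [AddCommMonoid E] [Module ℝ E] (K : NCConvexSet E) (n : ℕ) where
  app : ∀ {m : ℕ}, K.Elem m → Matrix (Fin n × Fin m) (Fin n × Fin m) ℝ
  equivariant : ∀ {m : ℕ} (U : Matrix (Fin m) (Fin m) ℝ), U.transpose * U = 1 →
    U * U.transpose = 1 → ∀ (x y : K.Elem m), y.val = compress U.transpose x.val →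
    app y = amp (n := n) U * app x * amp (n := n) U.transpose
  dsum_eq : ∀ {m k : ℕ} (x : K.Elem m) (y : K.Elem k) (z : K.Elem (m + k)),
    z.val = dSum x.val y.val → app z = dPair (app x) (app y)

/-- Boundedness of an nc function (uniform bound on the operator norms of its values). -/
def NCFun.Bounded {E : Type*} [AddCommMonoid E] [Module ℝ E] {K : NCConvexSet E} {n : ℕ}
    (f : NCFun K n) : Prop :=
  ∃ C : ℝ, ∀ {m : ℕ} (x : K.Elem m) (v w : Fin n × Fin m → ℝ),
    |∑ p, ∑ q, w p * f.app x p q * v q| ≤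
      C * Real.sqrt (∑ p, v p ^ 2) * Real.sqrt (∑ p, w p ^ 2)

/-- Continuity of an nc function on each level of `K`. -/
def NCFun.ContinuousOnK {E : Type*} [AddCommMonoid E] [Module ℝ E] [TopologicalSpace E]
    {K : NCConvexSet E} {n : ℕ} (f : NCFun K n) : Prop :=
  ∀ m : ℕ, Continuous fun x : K.Elem m => f.app x

/-- Selfadjointness of an nc function. -/
def NCFun.SelfAdj {E : Type*} [AddCommMonoid E] [Module ℝ E] {K : NCConvexSet E} {n : ℕ}
    (f : NCFun K n) : Prop :=
  ∀ {m : ℕ} (x : K.Elem m), (f.app x).IsSymm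

/-- `C(K)` : the continuous bounded nc functions on `K` (scalar level). -/
def CFun {E : Type*} [AddCommMonoid E] [Module ℝ E] [TopologicalSpace E]
    (K : NCConvexSet E) : Type _ :=
  {f : NCFun K 1 // f.Bounded ∧ f.ContinuousOnK}

/-- Affine nc functions (the elements of `A(K)`). -/
def IsAffineF {E : Type*} [AddCommMonoid E] [Module ℝ E] {K : NCConvexSet E} {n : ℕ}
    (f : NCFun K n) : Prop :=
  ∀ {m k : ℕ} (α : Matrix (Fin m) (Fin k) ℝ), IsIsometry α →
    ∀ (x : K.Elem m) (y : K.Elem k), y.val = compress α x.val →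
    f.app y = (amp (n := n) α).transpose * f.app x * amp (n := n) α

/-- Positivity of a matrix of elements of `C(K)` : pointwise positive semidefiniteness. -/
def PosMatC {E : Type*} [AddCommMonoid E] [Module ℝ E] [TopologicalSpace E]
    {K : NCConvexSet E} {k : ℕ} (G : Matrix (Fin k) (Fin k) (CFun K)) : Prop :=
  ∀ {m : ℕ} (x : K.Elem m),
    (Matrix.of fun p q : Fin k × (Fin 1 × Fin m) =>
      ((G p.1 q.1).val.app x) p.2 q.2).PosSemidef

/-- A unital completely positive map `μ : C(K) → M_d(ℝ)`. -/
structure IsUcpC {E : Type*} [AddCommMonoid E] [Module ℝ E] [TopologicalSpace E]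
    {K : NCConvexSet E} {d : ℕ} (μ : CFun K → Matrix (Fin d) (Fin d) ℝ) : Prop where
  map_add : ∀ f g h : CFun K,
    (∀ {m : ℕ} (x : K.Elem m), h.val.app x = f.val.app x + g.val.app x) → μ h = μ f + μ g
  map_smul : ∀ (c : ℝ) (f g : CFun K),
    (∀ {m : ℕ} (x : K.Elem m), g.val.app x = c • f.val.app x) → μ g = c • μ f
  unital : ∀ f : CFun K, (∀ {m : ℕ} (x : K.Elem m), f.val.app x = 1) → μ f = 1
  cp : ∀ (k : ℕ) (G : Matrix (Fin k) (Fin k) (CFun K)), PosMatC G →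
    (Matrix.of fun p q : Fin k × Fin d => μ (G p.1 q.1) p.2 q.2).PosSemidef

/-- Strip the trivial `Fin 1` factor from the value of a scalar-level nc function. -/
def sqMat {m : ℕ} (A : Matrix (Fin 1 × Fin m) (Fin 1 × Fin m) ℝ) :
    Matrix (Fin m) (Fin m) ℝ :=
  Matrix.of fun p q => A (0, p) (0, q)

/-- The point evaluation `δ_x : C(K) → M_m(ℝ)`. -/
def deltaAt {E : Type*} [AddCommMonoid E] [Module ℝ E] [TopologicalSpace E]
    {K : NCConvexSet E} {m : ℕ} (x : K.Elem m) :
    CFun K → Matrix (Fin m) (Fin m) ℝ :=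
  fun f => sqMat (f.val.app x)

/-- `μ` has barycenter `x` : `μ` restricted to `A(K)` is (evaluation at) `x`. -/
def HasBarycenter {E : Type*} [AddCommMonoid E] [Module ℝ E] [TopologicalSpace E]
    {K : NCConvexSet E} {d : ℕ} (μ : CFun K → Matrix (Fin d) (Fin d) ℝ)
    (x : K.Elem d) : Prop :=
  ∀ f : CFun K, IsAffineF f.val → μ f = deltaAt x f

/-- View a map `C(K) → M_d(ℝ)` as a `d × d` matrix over the dual-type `C(K) → ℝ`. -/
def toMatFun {E : Type*} [AddCommMonoid E] [Module ℝ E] [TopologicalSpace E]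
    {K : NCConvexSet E} {d : ℕ} (μ : CFun K → Matrix (Fin d) (Fin d) ℝ) :
    Matrix (Fin d) (Fin d) (CFun K → ℝ) :=
  Matrix.of fun i j f => μ f i j

/-! ## Epigraphs, convexity, lower semicontinuity of nc functions -/

/-- The epigraph of a selfadjoint nc function. -/
def RealEpi {E : Type*} [AddCommGroup E] [Module ℝ E] {K : NCConvexSet E} {n : ℕ}
    (f : NCFun K n) (m : ℕ) :
    Set (Matrix (Fin m) (Fin m) E × Matrix (Fin n × Fin m) (Fin n × Fin m) ℝ) :=
  {z | ∃ h : z.1 ∈ K.level m, z.2.IsSymm ∧ (z.2 - f.app ⟨z.1, h⟩).PosSemidef}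

/-- `f` is nc convex: its epigraph is an nc convex set. -/
def IsConvexF {E : Type*} [AddCommGroup E] [Module ℝ E] {K : NCConvexSet E} {n : ℕ}
    (f : NCFun K n) : Prop :=
  (∀ {m k : ℕ} (z : Matrix (Fin m) (Fin m) E × Matrix (Fin n × Fin m) (Fin n × Fin m) ℝ)
      (w : Matrix (Fin k) (Fin k) E × Matrix (Fin n × Fin k) (Fin n × Fin k) ℝ),
    z ∈ RealEpi f m → w ∈ RealEpi f k →
    (dSum z.1 w.1, dPair z.2 w.2) ∈ RealEpi f (m + k)) ∧
  (∀ {m k : ℕ} (γ : Matrix (Fin m) (Fin k) ℝ), IsIsometry γ →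
    ∀ z ∈ RealEpi f m,
      (compress γ z.1, (amp (n := n) γ).transpose * z.2 * amp (n := n) γ) ∈ RealEpi f k)

/-- `f` is lower semicontinuous: its epigraph is closed. -/
def IsLscF {E : Type*} [AddCommGroup E] [Module ℝ E] [TopologicalSpace E]
    {K : NCConvexSet E} {n : ℕ} (f : NCFun K n) : Prop :=
  ∀ m, IsClosed (RealEpi f m)

/-! ## The complexification of nc functions -/

/-- The elements of the complexification `K_c` at level `m`, as pairs `x + iy`. -/
def KcElem {E : Type*} [AddCommGroup E] [Module ℝ E] (K : NCConvexSet E) (m : ℕ) :=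
  {p : Matrix (Fin m) (Fin m) E × Matrix (Fin m) (Fin m) E // cMat p.1 p.2 ∈ K.level (m + m)}

def inL {m : ℕ} (p : Fin m) : Fin (m + m) := finSumFinEquiv (Sum.inl p)
def inR {m : ℕ} (p : Fin m) : Fin (m + m) := finSumFinEquiv (Sum.inr p)

/-- Real part of `u_m^* A u_m` for `A` a value at `c(x,y)`. -/
def fcReMat {n m : ℕ} (A : Matrix (Fin n × Fin (m + m)) (Fin n × Fin (m + m)) ℝ) :
    Matrix (Fin n × Fin m) (Fin n × Fin m) ℝ :=
  Matrix.of fun a b =>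
    (A (a.1, inL a.2) (b.1, inL b.2) + A (a.1, inR a.2) (b.1, inR b.2)) / 2

/-- Imaginary part of `u_m^* A u_m` for `A` a value at `c(x,y)`. -/
def fcImMat {n m : ℕ} (A : Matrix (Fin n × Fin (m + m)) (Fin n × Fin (m + m)) ℝ) :
    Matrix (Fin n × Fin m) (Fin n × Fin m) ℝ :=
  Matrix.of fun a b =>
    (A (a.1, inR a.2) (b.1, inL b.2) - A (a.1, inL a.2) (b.1, inR b.2)) / 2

/-- Real part of the complexification `f_c(x+iy) = u^* f(c(x,y)) u`. -/
def fcRe {E : Type*} [AddCommGroup E] [Module ℝ E] {K : NCConvexSet E} {n : ℕ}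
    (f : NCFun K n) {m : ℕ} (p : KcElem K m) :
    Matrix (Fin n × Fin m) (Fin n × Fin m) ℝ :=
  fcReMat (f.app ⟨cMat p.val.1 p.val.2, p.property⟩)

/-- Imaginary part of the complexification `f_c(x+iy) = u^* f(c(x,y)) u`. -/
def fcIm {E : Type*} [AddCommGroup E] [Module ℝ E] {K : NCConvexSet E} {n : ℕ}
    (f : NCFun K n) {m : ℕ} (p : KcElem K m) :
    Matrix (Fin n × Fin m) (Fin n × Fin m) ℝ :=
  fcImMat (f.app ⟨cMat p.val.1 p.val.2, p.property⟩)

/-- Positive semidefiniteness of the complex matrix `R + iI`, via its real picture. -/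
def PosSemidefC {ι : Type*} [Fintype ι] [DecidableEq ι] (R I : Matrix ι ι ℝ) : Prop :=
  (Matrix.fromBlocks R (-I) I R).PosSemidef

/-- Complex compression of a complex matrix value `(R, I)` by the complex
matrix `1_n ⊗ (a + ib)`. -/
def cpCompress {n m k : ℕ} (a b : Matrix (Fin m) (Fin k) ℝ)
    (R I : Matrix (Fin n × Fin m) (Fin n × Fin m) ℝ) :
    Matrix (Fin n × Fin k) (Fin n × Fin k) ℝ × Matrix (Fin n × Fin k) (Fin n × Fin k) ℝ :=
  ((amp (n := n) a).transpose * (R * amp (n := n) a - I * amp (n := n) b) +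
      (amp (n := n) b).transpose * (I * amp (n := n) a + R * amp (n := n) b),
   (amp (n := n) a).transpose * (I * amp (n := n) a + R * amp (n := n) b) -
      (amp (n := n) b).transpose * (R * amp (n := n) a - I * amp (n := n) b))

/-- The epigraph of the complexification `f_c` on `K_c`. -/
def CEpi {E : Type*} [AddCommGroup E] [Module ℝ E] {K : NCConvexSet E} {n : ℕ}
    (f : NCFun K n) (m : ℕ) :
    Set ((Matrix (Fin m) (Fin m) E × Matrix (Fin m) (Fin m) E) ×
      (Matrix (Fin n × Fin m) (Fin n × Fin m) ℝ × Matrix (Fin n × Fin m) (Fin n × Fin m) ℝ)) :=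
  {z | ∃ h : cMat z.1.1 z.1.2 ∈ K.level (m + m),
    z.2.1.IsSymm ∧ z.2.2.transpose = -z.2.2 ∧
    PosSemidefC (z.2.1 - fcRe f ⟨z.1, h⟩) (z.2.2 - fcIm f ⟨z.1, h⟩)}

/-- `f_c` is complex nc convex: its epigraph is a complex nc convex set. -/
def IsCConvexF {E : Type*} [AddCommGroup E] [Module ℝ E] {K : NCConvexSet E} {n : ℕ}
    (f : NCFun K n) : Prop :=
  (∀ {m k : ℕ}
      (z : (Matrix (Fin m) (Fin m) E × Matrix (Fin m) (Fin m) E) ×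
        (Matrix (Fin n × Fin m) (Fin n × Fin m) ℝ × Matrix (Fin n × Fin m) (Fin n × Fin m) ℝ))
      (w : (Matrix (Fin k) (Fin k) E × Matrix (Fin k) (Fin k) E) ×
        (Matrix (Fin n × Fin k) (Fin n × Fin k) ℝ × Matrix (Fin n × Fin k) (Fin n × Fin k) ℝ)),
    z ∈ CEpi f m → w ∈ CEpi f k →
    ((dSum z.1.1 w.1.1, dSum z.1.2 w.1.2), (dPair z.2.1 w.2.1, dPair z.2.2 w.2.2))
      ∈ CEpi f (m + k)) ∧
  (∀ {m k : ℕ} (a b : Matrix (Fin m) (Fin k) ℝ), IsCIsometry a b →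
    ∀ z ∈ CEpi f m,
      (compressC a b z.1.1 z.1.2, cpCompress a b z.2.1 z.2.2) ∈ CEpi f k)

/-- `f_c` is complex lower semicontinuous: its epigraph is closed. -/
def IsCLscF {E : Type*} [AddCommGroup E] [Module ℝ E] [TopologicalSpace E]
    {K : NCConvexSet E} {n : ℕ} (f : NCFun K n) : Prop :=
  ∀ m, IsClosed (CEpi f m)

end NCC
/-! ## Multivalued nc functions and convex envelopes -/

namespace NCC

/-- A bounded selfadjoint multivalued nc function `F : K → M_n(𝓜(ℝ))`. -/
structure MVFun {E : Type*} [AddCommGroup E] [Module ℝ E] (K : NCConvexSet E) (n : ℕ) where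
  app : ∀ {m : ℕ}, K.Elem m → Set (Matrix (Fin n × Fin m) (Fin n × Fin m) ℝ)
  symm_mem : ∀ {m : ℕ} (x : K.Elem m) {α}, α ∈ app x → α.IsSymm
  upward : ∀ {m : ℕ} (x : K.Elem m) {α β}, α ∈ app x → β.IsSymm →
    (β - α).PosSemidef → β ∈ app x
  directed : ∀ {m : ℕ} (x : K.Elem m) {α β}, α ∈ app x → β ∈ app x →
    ∃ γ ∈ app x, (γ - α).PosSemidef ∧ (γ - β).PosSemidef
  equivariant : ∀ {m : ℕ} (U : Matrix (Fin m) (Fin m) ℝ), U.transpose * U = 1 →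
    U * U.transpose = 1 → ∀ (x y : K.Elem m), y.val = compress U.transpose x.val →
    app y = (fun A => amp (n := n) U * A * amp (n := n) U.transpose) '' app x
  dsum_mem : ∀ {m k : ℕ} (x : K.Elem m) (y : K.Elem k) (z : K.Elem (m + k)),
    z.val = dSum x.val y.val → ∀ {A B}, A ∈ app x → B ∈ app y → dPair A B ∈ app z
  bounded : ∃ lam : ℝ, 0 < lam ∧ ∀ {m : ℕ} (x : K.Elem m) {β}, β ∈ app x →
    ∃ α ∈ app x, (β - α).PosSemidef ∧
      (lam • (1 : Matrix (Fin n × Fin m) (Fin n × Fin m) ℝ) - α).PosSemidef ∧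
      (α + lam • (1 : Matrix (Fin n × Fin m) (Fin n × Fin m) ℝ)).PosSemidef

/-- The graph of a multivalued nc function. -/
def MVGraph {E : Type*} [AddCommGroup E] [Module ℝ E] {K : NCConvexSet E} {n : ℕ}
    (F : MVFun K n) (m : ℕ) :
    Set (Matrix (Fin m) (Fin m) E × Matrix (Fin n × Fin m) (Fin n × Fin m) ℝ) :=
  {z | ∃ h : z.1 ∈ K.level m, z.2 ∈ F.app ⟨z.1, h⟩}

/-- The closed nc convex hull of a graded family of graphs/epigraphs. -/
def pairHull {E : Type*} [AddCommGroup E] [Module ℝ E] [TopologicalSpace E] {n : ℕ}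
    (X : ∀ m : ℕ, Set (Matrix (Fin m) (Fin m) E × Matrix (Fin n × Fin m) (Fin n × Fin m) ℝ)) :
    ∀ m : ℕ, Set (Matrix (Fin m) (Fin m) E × Matrix (Fin n × Fin m) (Fin n × Fin m) ℝ) :=
  fun m => {z | ∀ Y : ∀ k : ℕ,
      Set (Matrix (Fin k) (Fin k) E × Matrix (Fin n × Fin k) (Fin n × Fin k) ℝ),
    (∀ k, IsClosed (Y k)) →
    (∀ {k l : ℕ} (a : Matrix (Fin k) (Fin k) E × Matrix (Fin n × Fin k) (Fin n × Fin k) ℝ)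
        (b : Matrix (Fin l) (Fin l) E × Matrix (Fin n × Fin l) (Fin n × Fin l) ℝ),
      a ∈ Y k → b ∈ Y l → (dSum a.1 b.1, dPair a.2 b.2) ∈ Y (k + l)) →
    (∀ {k l : ℕ} (γ : Matrix (Fin k) (Fin l) ℝ), IsIsometry γ →
      ∀ a ∈ Y k, (compress γ a.1, (amp (n := n) γ).transpose * a.2 * amp (n := n) γ) ∈ Y l) →
    (∀ k, X k ⊆ Y k) → z ∈ Y m}

/-- The value set of the complexification `F_c(x + iy) = u^* F(c(x,y)) u`. -/
def FcSet {E : Type*} [AddCommGroup E] [Module ℝ E] {K : NCConvexSet E} {n : ℕ}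
    (F : MVFun K n) {m : ℕ} (p : KcElem K m) :
    Set (Matrix (Fin n × Fin m) (Fin n × Fin m) ℝ × Matrix (Fin n × Fin m) (Fin n × Fin m) ℝ) :=
  {RI | ∃ A ∈ F.app ⟨cMat p.val.1 p.val.2, p.property⟩, RI = (fcReMat A, fcImMat A)}

/-- The graph of a complex multivalued function on `K_c`, given as a set-valued assignment. -/
def CMVGraph {E : Type*} [AddCommGroup E] [Module ℝ E] {K : NCConvexSet E} {n : ℕ}
    (G : ∀ m : ℕ, KcElem K m →
      Set (Matrix (Fin n × Fin m) (Fin n × Fin m) ℝ × Matrix (Fin n × Fin m) (Fin n × Fin m) ℝ))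
    (m : ℕ) :
    Set ((Matrix (Fin m) (Fin m) E × Matrix (Fin m) (Fin m) E) ×
      (Matrix (Fin n × Fin m) (Fin n × Fin m) ℝ × Matrix (Fin n × Fin m) (Fin n × Fin m) ℝ)) :=
  {z | ∃ h : cMat z.1.1 z.1.2 ∈ K.level (m + m), z.2 ∈ G m ⟨z.1, h⟩}

/-- The closed complex nc convex hull of a graded family of complex graphs. -/
def cPairHull {E : Type*} [AddCommGroup E] [Module ℝ E] [TopologicalSpace E] {n : ℕ}
    (X : ∀ m : ℕ, Set ((Matrix (Fin m) (Fin m) E × Matrix (Fin m) (Fin m) E) ×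
      (Matrix (Fin n × Fin m) (Fin n × Fin m) ℝ × Matrix (Fin n × Fin m) (Fin n × Fin m) ℝ))) :
    ∀ m : ℕ, Set ((Matrix (Fin m) (Fin m) E × Matrix (Fin m) (Fin m) E) ×
      (Matrix (Fin n × Fin m) (Fin n × Fin m) ℝ × Matrix (Fin n × Fin m) (Fin n × Fin m) ℝ)) :=
  fun m => {z | ∀ Y : ∀ k : ℕ,
      Set ((Matrix (Fin k) (Fin k) E × Matrix (Fin k) (Fin k) E) ×
        (Matrix (Fin n × Fin k) (Fin n × Fin k) ℝ × Matrix (Fin n × Fin k) (Fin n × Fin k) ℝ)),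
    (∀ k, IsClosed (Y k)) →
    (∀ {k l : ℕ}
        (a : (Matrix (Fin k) (Fin k) E × Matrix (Fin k) (Fin k) E) ×
          (Matrix (Fin n × Fin k) (Fin n × Fin k) ℝ × Matrix (Fin n × Fin k) (Fin n × Fin k) ℝ))
        (b : (Matrix (Fin l) (Fin l) E × Matrix (Fin l) (Fin l) E) ×
          (Matrix (Fin n × Fin l) (Fin n × Fin l) ℝ × Matrix (Fin n × Fin l) (Fin n × Fin l) ℝ)),
      a ∈ Y k → b ∈ Y l →
      ((dSum a.1.1 b.1.1, dSum a.1.2 b.1.2), (dPair a.2.1 b.2.1, dPair a.2.2 b.2.2))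
        ∈ Y (k + l)) →
    (∀ {k l : ℕ} (γa γb : Matrix (Fin k) (Fin l) ℝ), IsCIsometry γa γb →
      ∀ a ∈ Y k, (compressC γa γb a.1.1 a.1.2, cpCompress γa γb a.2.1 a.2.2) ∈ Y l) →
    (∀ k, X k ⊆ Y k) → z ∈ Y m}

end NCC
/-! ## Real Hilbert spaces, operator systems and ucp maps -/

namespace NCC

/-- Bundled real Hilbert space. -/
structure HilbertR where
  carrier : Type
  [nacg : NormedAddCommGroup carrier]
  [ipr : InnerProductSpace ℝ carrier]
  [cs : CompleteSpace carrier]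

attribute [instance] HilbertR.nacg HilbertR.ipr HilbertR.cs

/-- Bundled compact Hausdorff space. -/
structure CompactT2 where
  carrier : Type
  [ts : TopologicalSpace carrier]
  [cpt : CompactSpace carrier]
  [t2 : T2Space carrier]

attribute [instance] CompactT2.ts CompactT2.cpt CompactT2.t2

/-- The real inner product. -/
def rip {H : Type*} [NormedAddCommGroup H] [InnerProductSpace ℝ H] (x y : H) : ℝ :=
  inner ℝ x y

/-- Positivity of a matrix of Hilbert space operators. -/
def OpMatPos {H : Type*} [NormedAddCommGroup H] [InnerProductSpace ℝ H] {k : ℕ}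
    (T : Matrix (Fin k) (Fin k) (H →L[ℝ] H)) : Prop :=
  (∀ (i j : Fin k) (ξ η : H), rip (T i j ξ) (η) = rip (ξ) (T j i η)) ∧
  ∀ v : Fin k → H, 0 ≤ ∑ i, ∑ j, rip (T i j (v j)) (v i)

/-- An isometry between real inner product spaces. -/
def IsIsometryOp {H W : Type*} [NormedAddCommGroup H] [InnerProductSpace ℝ H]
    [NormedAddCommGroup W] [InnerProductSpace ℝ W] (ι : H →L[ℝ] W) : Prop :=
  ∀ ξ η : H, rip (ι ξ) (ι η) = rip (ξ) (η)

section OS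

variable {H : Type*} [NormedAddCommGroup H] [InnerProductSpace ℝ H] [CompleteSpace H]

/-- A unital completely positive map on a (concrete) real operator system `V ⊆ B(H)`. -/
def IsUcpOS (V : Submodule ℝ (H →L[ℝ] H)) {W : Type*} [NormedAddCommGroup W]
    [InnerProductSpace ℝ W] [CompleteSpace W] (φ : V → (W →L[ℝ] W)) : Prop :=
  (∀ u v : V, φ (u + v) = φ u + φ v) ∧
  (∀ (c : ℝ) (v : V), φ (c • v) = c • φ v) ∧
  (∀ v : V, (v : H →L[ℝ] H) = 1 → φ v = 1) ∧
  (∀ (k : ℕ) (T : Matrix (Fin k) (Fin k) V),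
    OpMatPos (Matrix.of fun i j => (T i j : H →L[ℝ] H)) →
    OpMatPos (Matrix.of fun i j => φ (T i j)))

/-- `ψ` (on `L`) dilates `φ` (on `W`) via the isometry `ι : W → L`. -/
def DilatesOS {V : Submodule ℝ (H →L[ℝ] H)} {W L : Type*}
    [NormedAddCommGroup W] [InnerProductSpace ℝ W] [CompleteSpace W]
    [NormedAddCommGroup L] [InnerProductSpace ℝ L] [CompleteSpace L]
    (φ : V → (W →L[ℝ] W)) (ψ : V → (L →L[ℝ] L)) (ι : W →L[ℝ] L) : Prop :=
  IsIsometryOp ι ∧ ∀ (v : V) (ξ η : W), rip (ψ v (ι ξ)) (ι η) = rip (φ v ξ) (η)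

/-- `φ` is a maximal ucp map: every dilation of it is trivial. -/
def IsMaximalOS (V : Submodule ℝ (H →L[ℝ] H)) {W : Type*}
    [NormedAddCommGroup W] [InnerProductSpace ℝ W] [CompleteSpace W]
    (φ : V → (W →L[ℝ] W)) : Prop :=
  ∀ (L : HilbertR) (ψ : V → (L.carrier →L[ℝ] L.carrier)) (ι : W →L[ℝ] L.carrier),
    IsUcpOS V ψ → DilatesOS φ ψ ι → ∀ v : V,
      Commute (ψ v) (ι.comp (ContinuousLinearMap.adjoint ι))

/-- `φ` is a pure ucp map on the operator system `V`. -/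
def IsPureOS (V : Submodule ℝ (H →L[ℝ] H)) {W : Type*}
    [NormedAddCommGroup W] [InnerProductSpace ℝ W] [CompleteSpace W]
    (φ : V → (W →L[ℝ] W)) : Prop :=
  ∀ (N : ℕ) (Ls : Fin N → HilbertR)
    (ψs : ∀ i, V → ((Ls i).carrier →L[ℝ] (Ls i).carrier))
    (ιs : ∀ i, W →L[ℝ] (Ls i).carrier),
    (∀ i, IsUcpOS V (ψs i)) → (∀ i, ιs i ≠ 0) →
    (∑ i, (ContinuousLinearMap.adjoint (ιs i)).comp (ιs i)) = 1 →
    (∀ v : V, φ v = ∑ i, (ContinuousLinearMap.adjoint (ιs i)).comp ((ψs i v).comp (ιs i))) →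
    ∀ i, ∃ (c : ℝ) (β : W →L[ℝ] (Ls i).carrier), 0 < c ∧ IsIsometryOp β ∧
      ιs i = c • β ∧
      ∀ v : V, φ v = (ContinuousLinearMap.adjoint β).comp ((ψs i v).comp β)

/-- `φ` is an extreme ucp map on the operator system `V`. -/
def IsExtremeOS (V : Submodule ℝ (H →L[ℝ] H)) {W : Type*}
    [NormedAddCommGroup W] [InnerProductSpace ℝ W] [CompleteSpace W]
    (φ : V → (W →L[ℝ] W)) : Prop :=
  ∀ (N : ℕ) (Ls : Fin N → HilbertR)
    (ψs : ∀ i, V → ((Ls i).carrier →L[ℝ] (Ls i).carrier))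
    (ιs : ∀ i, W →L[ℝ] (Ls i).carrier),
    (∀ i, IsUcpOS V (ψs i)) → (∀ i, ιs i ≠ 0) →
    (∑ i, (ContinuousLinearMap.adjoint (ιs i)).comp (ιs i)) = 1 →
    (∀ v : V, φ v = ∑ i, (ContinuousLinearMap.adjoint (ιs i)).comp ((ψs i v).comp (ιs i))) →
    ∀ i, ∃ (c : ℝ) (β : W →L[ℝ] (Ls i).carrier), 0 < c ∧ IsIsometryOp β ∧
      ιs i = c • β ∧
      (∀ v : V, φ v = (ContinuousLinearMap.adjoint β).comp ((ψs i v).comp β)) ∧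
      ∀ v : V, Commute (ψs i v) (β.comp (ContinuousLinearMap.adjoint β))

end OS

section CA

variable (A : Type*) [NormedRing A] [StarRing A] [CStarRing A] [NormedAlgebra ℝ A]
  [CompleteSpace A] [StarModule ℝ A]

/-- Positivity of a matrix over a real C*-algebra. -/
def AMatPos {k : ℕ} (M : Matrix (Fin k) (Fin k) A) : Prop :=
  ∃ b : Matrix (Fin k) (Fin k) A, M = star b * b

/-- A unital completely positive map on the real C*-algebra `A`. -/
def IsUcpCA {W : Type*} [NormedAddCommGroup W] [InnerProductSpace ℝ W] [CompleteSpace W]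
    (φ : A → (W →L[ℝ] W)) : Prop :=
  (∀ a b : A, φ (a + b) = φ a + φ b) ∧
  (∀ (c : ℝ) (a : A), φ (c • a) = c • φ a) ∧
  φ 1 = 1 ∧
  ∀ (k : ℕ) (M : Matrix (Fin k) (Fin k) A), AMatPos A M →
    OpMatPos (Matrix.of fun i j => φ (M i j))

/-- A unital *-representation of `A` on a real Hilbert space. -/
def IsStarRepA {W : Type*} [NormedAddCommGroup W] [InnerProductSpace ℝ W] [CompleteSpace W]
    (π : A → (W →L[ℝ] W)) : Prop :=
  (∀ a b : A, π (a + b) = π a + π b) ∧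
  (∀ (c : ℝ) (a : A), π (c • a) = c • π a) ∧
  π 1 = 1 ∧
  (∀ a b : A, π (a * b) = (π a).comp (π b)) ∧
  (∀ a : A, π (star a) = star (π a))

/-- Irreducibility: the selfadjoint part of the commutant is trivial. -/
def IsIrredA {W : Type*} [NormedAddCommGroup W] [InnerProductSpace ℝ W] [CompleteSpace W]
    (π : A → (W →L[ℝ] W)) : Prop :=
  ∀ T : W →L[ℝ] W, IsSelfAdjoint T → (∀ a : A, Commute T (π a)) →
    ∃ c : ℝ, T = c • (1 : W →L[ℝ] W)

/-- `ψ` dilates `φ` via the isometry `ι` (C*-algebra version). -/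
def DilatesCA {W L : Type*}
    [NormedAddCommGroup W] [InnerProductSpace ℝ W] [CompleteSpace W]
    [NormedAddCommGroup L] [InnerProductSpace ℝ L] [CompleteSpace L]
    (φ : A → (W →L[ℝ] W)) (ψ : A → (L →L[ℝ] L)) (ι : W →L[ℝ] L) : Prop :=
  IsIsometryOp ι ∧ ∀ (a : A) (ξ η : W), rip (ψ a (ι ξ)) (ι η) = rip (φ a ξ) (η)

/-- `φ` is a maximal ucp map on the C*-algebra `A`. -/
def IsMaximalCA {W : Type*} [NormedAddCommGroup W] [InnerProductSpace ℝ W] [CompleteSpace W]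
    (φ : A → (W →L[ℝ] W)) : Prop :=
  ∀ (L : HilbertR) (ψ : A → (L.carrier →L[ℝ] L.carrier)) (ι : W →L[ℝ] L.carrier),
    IsUcpCA A ψ → DilatesCA A φ ψ ι → ∀ a : A,
      Commute (ψ a) (ι.comp (ContinuousLinearMap.adjoint ι))

/-- `φ` is a pure ucp map on the C*-algebra `A`. -/
def IsPureCA {W : Type*} [NormedAddCommGroup W] [InnerProductSpace ℝ W] [CompleteSpace W]
    (φ : A → (W →L[ℝ] W)) : Prop :=
  ∀ (N : ℕ) (Ls : Fin N → HilbertR)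
    (ψs : ∀ i, A → ((Ls i).carrier →L[ℝ] (Ls i).carrier))
    (ιs : ∀ i, W →L[ℝ] (Ls i).carrier),
    (∀ i, IsUcpCA A (ψs i)) → (∀ i, ιs i ≠ 0) →
    (∑ i, (ContinuousLinearMap.adjoint (ιs i)).comp (ιs i)) = 1 →
    (∀ a : A, φ a = ∑ i, (ContinuousLinearMap.adjoint (ιs i)).comp ((ψs i a).comp (ιs i))) →
    ∀ i, ∃ (c : ℝ) (β : W →L[ℝ] (Ls i).carrier), 0 < c ∧ IsIsometryOp β ∧
      ιs i = c • β ∧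
      ∀ a : A, φ a = (ContinuousLinearMap.adjoint β).comp ((ψs i a).comp β)

/-- `φ` is an extreme ucp map on the C*-algebra `A`. -/
def IsExtremeCA {W : Type*} [NormedAddCommGroup W] [InnerProductSpace ℝ W] [CompleteSpace W]
    (φ : A → (W →L[ℝ] W)) : Prop :=
  ∀ (N : ℕ) (Ls : Fin N → HilbertR)
    (ψs : ∀ i, A → ((Ls i).carrier →L[ℝ] (Ls i).carrier))
    (ιs : ∀ i, W →L[ℝ] (Ls i).carrier),
    (∀ i, IsUcpCA A (ψs i)) → (∀ i, ιs i ≠ 0) →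
    (∑ i, (ContinuousLinearMap.adjoint (ιs i)).comp (ιs i)) = 1 →
    (∀ a : A, φ a = ∑ i, (ContinuousLinearMap.adjoint (ιs i)).comp ((ψs i a).comp (ιs i))) →
    ∀ i, ∃ (c : ℝ) (β : W →L[ℝ] (Ls i).carrier), 0 < c ∧ IsIsometryOp β ∧
      ιs i = c • β ∧
      (∀ a : A, φ a = (ContinuousLinearMap.adjoint β).comp ((ψs i a).comp β)) ∧
      ∀ a : A, Commute (ψs i a) (β.comp (ContinuousLinearMap.adjoint β))

end CA

/-- The operator norm of a matrix of Hilbert space operators, described via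
inner products against pairs of unit vectors. -/
def blockNorm {H : Type*} [NormedAddCommGroup H] [InnerProductSpace ℝ H] {k : ℕ}
    (T : Matrix (Fin k) (Fin k) (H →L[ℝ] H)) : ℝ :=
  sSup {r : ℝ | ∃ v w : (Fin k → H), (∑ i, ‖v i‖ ^ 2) ≤ 1 ∧ (∑ i, ‖w i‖ ^ 2) ≤ 1 ∧
    r = |∑ i, ∑ j, rip (T i j (v j)) (w i)|}

end NCC
namespace NCC


/-! ### Auxiliary machinery for the proof -/

section Aux

variable {E : Type*} [AddCommGroup E] [Module ℝ E]

/-- General-index version of `lmul`. -/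
def lmulG {ι κ ρ : Type*} [Fintype κ] (a : Matrix ι κ ℝ) (x : Matrix κ ρ E) : Matrix ι ρ E :=
  Matrix.of fun i j => ∑ k, a i k • x k j

/-- General-index version of `rmulE`. -/
def rmulG {ι κ ρ : Type*} [Fintype κ] (x : Matrix ι κ E) (a : Matrix κ ρ ℝ) : Matrix ι ρ E :=
  Matrix.of fun i j => ∑ k, a k j • x i k

lemma lmul_eq {m k p : ℕ} (a : Matrix (Fin m) (Fin k) ℝ) (x : Matrix (Fin k) (Fin p) E) :
    lmul a x = lmulG a x := rfl

lemma rmulE_eq {m k p : ℕ} (x : Matrix (Fin m) (Fin k) E) (a : Matrix (Fin k) (Fin p) ℝ) :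
    rmulE x a = rmulG x a := rfl

lemma compress_eq {m k : ℕ} (α : Matrix (Fin m) (Fin k) ℝ) (x : Matrix (Fin m) (Fin m) E) :
    compress α x = lmulG α.transpose (rmulG x α) := rfl

section Bilin

variable {ι κ ρ : Type*} [Fintype κ]

lemma lmulG_add_left (a b : Matrix ι κ ℝ) (x : Matrix κ ρ E) :
    lmulG (a + b) x = lmulG a x + lmulG b x := by
  ext i j; simp [lmulG, add_smul, Finset.sum_add_distrib]

lemma lmulG_neg_left (a : Matrix ι κ ℝ) (x : Matrix κ ρ E) :
    lmulG (-a) x = -lmulG a x := by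
  ext i j; simp [lmulG, neg_smul]

lemma lmulG_neg_right (a : Matrix ι κ ℝ) (x : Matrix κ ρ E) :
    lmulG a (-x) = -lmulG a x := by
  ext i j; simp [lmulG, smul_neg]

lemma lmulG_zero_left (x : Matrix κ ρ E) : lmulG (0 : Matrix ι κ ℝ) x = 0 := by
  ext i j; simp [lmulG]

lemma lmulG_zero_right (a : Matrix ι κ ℝ) : lmulG a (0 : Matrix κ ρ E) = 0 := by
  ext i j; simp [lmulG]

lemma lmulG_one [DecidableEq κ] (x : Matrix κ ρ E) : lmulG (1 : Matrix κ κ ℝ) x = x := by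
  ext i j; simp [lmulG, Matrix.one_apply, ite_smul]

lemma rmulG_add_right (x : Matrix ι κ E) (a b : Matrix κ ρ ℝ) :
    rmulG x (a + b) = rmulG x a + rmulG x b := by
  ext i j; simp [rmulG, add_smul, Finset.sum_add_distrib]

lemma rmulG_neg_left (x : Matrix ι κ E) (a : Matrix κ ρ ℝ) :
    rmulG (-x) a = -rmulG x a := by
  ext i j; simp [rmulG, smul_neg]

lemma rmulG_neg_right (x : Matrix ι κ E) (a : Matrix κ ρ ℝ) :
    rmulG x (-a) = -rmulG x a := by
  ext i j; simp [rmulG, neg_smul]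

lemma rmulG_zero_left (a : Matrix κ ρ ℝ) : rmulG (0 : Matrix ι κ E) a = 0 := by
  ext i j; simp [rmulG]

lemma rmulG_zero_right (x : Matrix ι κ E) : rmulG x (0 : Matrix κ ρ ℝ) = 0 := by
  ext i j; simp [rmulG]

lemma rmulG_one [DecidableEq κ] (x : Matrix ι κ E) : rmulG x (1 : Matrix κ κ ℝ) = x := by
  ext i j; simp [rmulG, Matrix.one_apply, ite_smul]

end Bilin

section Comp

variable {ι κ κ' ρ : Type*} [Fintype κ] [Fintype κ']

lemma lmulG_lmulG (a : Matrix ι κ ℝ) (b : Matrix κ κ' ℝ) (x : Matrix κ' ρ E) :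
    lmulG (a * b) x = lmulG a (lmulG b x) := by
  ext i j
  simp only [lmulG, Matrix.of_apply, Matrix.mul_apply, Finset.sum_smul, Finset.smul_sum,
    smul_smul]
  exact Finset.sum_comm

lemma rmulG_rmulG (x : Matrix ι κ E) (a : Matrix κ κ' ℝ) (b : Matrix κ' ρ ℝ) :
    rmulG x (a * b) = rmulG (rmulG x a) b := by
  ext i j
  simp only [rmulG, Matrix.of_apply, Matrix.mul_apply, Finset.sum_smul, Finset.smul_sum,
    smul_smul]
  rw [Finset.sum_comm]
  apply Finset.sum_congr rfl; intro k _
  apply Finset.sum_congr rfl; intro l _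
  rw [mul_comm]

lemma lmulG_rmulG (a : Matrix ι κ ℝ) (x : Matrix κ κ' E) (b : Matrix κ' ρ ℝ) :
    lmulG a (rmulG x b) = rmulG (lmulG a x) b := by
  ext i j
  simp only [lmulG, rmulG, Matrix.of_apply, Finset.smul_sum, smul_smul]
  rw [Finset.sum_comm]
  apply Finset.sum_congr rfl; intro k _
  apply Finset.sum_congr rfl; intro l _
  rw [mul_comm]

end Comp

section Submx

lemma lmulG_submatrix {ι ι' κ κ' ρ ρ' : Type*} [Fintype κ] [Fintype κ']
    (a : Matrix ι κ ℝ) (x : Matrix κ ρ E) (e : ι' → ι) (f : κ' ≃ κ) (g : ρ' → ρ) :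
    lmulG (a.submatrix e ⇑f) (x.submatrix ⇑f g) = (lmulG a x).submatrix e g := by
  ext i j
  simp only [lmulG, Matrix.submatrix_apply, Matrix.of_apply]
  exact Fintype.sum_equiv f _ _ fun k => rfl

lemma rmulG_submatrix {ι ι' κ κ' ρ ρ' : Type*} [Fintype κ] [Fintype κ']
    (x : Matrix ι κ E) (a : Matrix κ ρ ℝ) (e : ι' → ι) (f : κ' ≃ κ) (g : ρ' → ρ) :
    rmulG (x.submatrix e ⇑f) (a.submatrix ⇑f g) = (rmulG x a).submatrix e g := by
  ext i j
  simp only [rmulG, Matrix.submatrix_apply, Matrix.of_apply]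
  exact Fintype.sum_equiv f _ _ fun k => rfl

lemma submatrix_equiv_cancel {α : Type*} {ι ι' ρ ρ' : Type*} (f : ι' ≃ ι) (g : ρ' ≃ ρ)
    {M N : Matrix ι ρ α} (h : M.submatrix ⇑f ⇑g = N.submatrix ⇑f ⇑g) : M = N := by
  ext i j
  have := congrFun (congrFun h (f.symm i)) (g.symm j)
  simpa using this

end Submx

section Blocks

variable {ι₁ ι₂ κ₁ κ₂ ρ₁ ρ₂ ρ : Type*} [Fintype κ₁] [Fintype κ₂]

lemma lmulG_fromBlocks
    (A : Matrix ι₁ κ₁ ℝ) (B : Matrix ι₁ κ₂ ℝ) (C : Matrix ι₂ κ₁ ℝ) (D : Matrix ι₂ κ₂ ℝ)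
    (X : Matrix κ₁ ρ₁ E) (Y : Matrix κ₁ ρ₂ E) (Z : Matrix κ₂ ρ₁ E) (W : Matrix κ₂ ρ₂ E) :
    lmulG (Matrix.fromBlocks A B C D) (Matrix.fromBlocks X Y Z W) =
      Matrix.fromBlocks (lmulG A X + lmulG B Z) (lmulG A Y + lmulG B W)
        (lmulG C X + lmulG D Z) (lmulG C Y + lmulG D W) := by
  ext (i | i) (j | j) <;>
    simp [lmulG, Fintype.sum_sum_type]

lemma rmulG_fromBlocks
    (X : Matrix ι₁ κ₁ E) (Y : Matrix ι₁ κ₂ E) (Z : Matrix ι₂ κ₁ E) (W : Matrix ι₂ κ₂ E)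
    (A : Matrix κ₁ ρ₁ ℝ) (B : Matrix κ₁ ρ₂ ℝ) (C : Matrix κ₂ ρ₁ ℝ) (D : Matrix κ₂ ρ₂ ℝ) :
    rmulG (Matrix.fromBlocks X Y Z W) (Matrix.fromBlocks A B C D) =
      Matrix.fromBlocks (rmulG X A + rmulG Y C) (rmulG X B + rmulG Y D)
        (rmulG Z A + rmulG W C) (rmulG Z B + rmulG W D) := by
  ext (i | i) (j | j) <;>
    simp [rmulG, Fintype.sum_sum_type]

lemma lmulG_fromColumns_fromRows
    (A : Matrix ρ κ₁ ℝ) (B : Matrix ρ κ₂ ℝ) (X : Matrix κ₁ ρ₁ E) (Y : Matrix κ₂ ρ₁ E) :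
    lmulG (Matrix.fromCols A B) (Matrix.fromRows X Y) = lmulG A X + lmulG B Y := by
  ext i j
  simp [lmulG, Matrix.fromCols_apply_inl, Matrix.fromCols_apply_inr, Matrix.fromRows_apply_inl,
    Matrix.fromRows_apply_inr, Fintype.sum_sum_type]

lemma rmulG_fromBlocks_fromRows
    (X : Matrix ι₁ κ₁ E) (Y : Matrix ι₁ κ₂ E) (Z : Matrix ι₂ κ₁ E) (W : Matrix ι₂ κ₂ E)
    (A : Matrix κ₁ ρ ℝ) (B : Matrix κ₂ ρ ℝ) :
    rmulG (Matrix.fromBlocks X Y Z W) (Matrix.fromRows A B) =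
      Matrix.fromRows (rmulG X A + rmulG Y B) (rmulG Z A + rmulG W B) := by
  ext (i | i) j <;>
    simp [rmulG, Matrix.fromRows_apply_inl, Matrix.fromRows_apply_inr, Fintype.sum_sum_type]

end Blocks

lemma compress_compress {N p q : ℕ} (A : Matrix (Fin N) (Fin p) ℝ)
    (B : Matrix (Fin p) (Fin q) ℝ) (Y : Matrix (Fin N) (Fin N) E) :
    compress (A * B) Y = compress B (compress A Y) := by
  rw [compress_eq, compress_eq, compress_eq]
  simp only [Matrix.transpose_mul, rmulG_rmulG, lmulG_lmulG, lmulG_rmulG]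

lemma RComm_add {N : ℕ} {P Q : Matrix (Fin N) (Fin N) ℝ} {Y : Matrix (Fin N) (Fin N) E}
    (hP : RComm P Y) (hQ : RComm Q Y) : RComm (P + Q) Y := by
  show lmul (P + Q) Y = rmulE Y (P + Q)
  rw [lmul_eq, rmulE_eq, lmulG_add_left, rmulG_add_right]
  rw [show lmulG P Y = rmulG Y P from hP, show lmulG Q Y = rmulG Y Q from hQ]

lemma cMat_eq {k : ℕ} (x y : Matrix (Fin k) (Fin k) E) :
    cMat x y = (Matrix.fromBlocks x (-y) y x).submatrix
      ⇑(finSumFinEquiv : Fin k ⊕ Fin k ≃ Fin (k + k)).symm ⇑finSumFinEquiv.symm := rfl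

/-- The inclusion of the first block summand. -/
def eMatL (k : ℕ) : Matrix (Fin (k + k)) (Fin k) ℝ :=
  (Matrix.fromRows (1 : Matrix (Fin k) (Fin k) ℝ) (0 : Matrix (Fin k) (Fin k) ℝ)).submatrix
    ⇑(finSumFinEquiv : Fin k ⊕ Fin k ≃ Fin (k + k)).symm id

/-- The inclusion of the second block summand. -/
def eMatR (k : ℕ) : Matrix (Fin (k + k)) (Fin k) ℝ :=
  (Matrix.fromRows (0 : Matrix (Fin k) (Fin k) ℝ) (1 : Matrix (Fin k) (Fin k) ℝ)).submatrix
    ⇑(finSumFinEquiv : Fin k ⊕ Fin k ≃ Fin (k + k)).symm id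

lemma eMatL_iso (k : ℕ) : IsIsometry (eMatL k) := by
  show (eMatL k).transpose * eMatL k = 1
  rw [eMatL, Matrix.transpose_submatrix, Matrix.submatrix_mul_equiv, Matrix.transpose_fromRows,
    Matrix.transpose_one, Matrix.transpose_zero, Matrix.fromCols_mul_fromRows]
  simp

lemma eMatR_iso (k : ℕ) : IsIsometry (eMatR k) := by
  show (eMatR k).transpose * eMatR k = 1
  rw [eMatR, Matrix.transpose_submatrix, Matrix.submatrix_mul_equiv, Matrix.transpose_fromRows,
    Matrix.transpose_one, Matrix.transpose_zero, Matrix.fromCols_mul_fromRows]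
  simp

lemma eMat_sum (k : ℕ) :
    eMatL k * (eMatL k).transpose + eMatR k * (eMatR k).transpose = 1 := by
  have h1 : eMatL k * (eMatL k).transpose =
      (Matrix.fromBlocks (1 : Matrix (Fin k) (Fin k) ℝ) 0 0 0).submatrix
        ⇑(finSumFinEquiv : Fin k ⊕ Fin k ≃ Fin (k + k)).symm ⇑finSumFinEquiv.symm := by
    rw [eMatL, Matrix.transpose_submatrix,
      ← Matrix.submatrix_mul _ _ _ id _ Function.bijective_id,
      Matrix.transpose_fromRows, Matrix.transpose_one, Matrix.transpose_zero,
      Matrix.fromRows_mul_fromCols]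
    simp
  have h2 : eMatR k * (eMatR k).transpose =
      (Matrix.fromBlocks (0 : Matrix (Fin k) (Fin k) ℝ) 0 0 1).submatrix
        ⇑(finSumFinEquiv : Fin k ⊕ Fin k ≃ Fin (k + k)).symm ⇑finSumFinEquiv.symm := by
    rw [eMatR, Matrix.transpose_submatrix,
      ← Matrix.submatrix_mul _ _ _ id _ Function.bijective_id,
      Matrix.transpose_fromRows, Matrix.transpose_one, Matrix.transpose_zero,
      Matrix.fromRows_mul_fromCols]
    simp
  rw [h1, h2]
  have hsum : (Matrix.fromBlocks (1 : Matrix (Fin k) (Fin k) ℝ) 0 0 0 +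
      Matrix.fromBlocks 0 0 0 1) = (1 : Matrix (Fin k ⊕ Fin k) (Fin k ⊕ Fin k) ℝ) := by
    rw [Matrix.fromBlocks_add]
    simpa using Matrix.fromBlocks_one
  calc (Matrix.fromBlocks (1 : Matrix (Fin k) (Fin k) ℝ) 0 0 0).submatrix
        ⇑(finSumFinEquiv : Fin k ⊕ Fin k ≃ Fin (k + k)).symm ⇑finSumFinEquiv.symm +
      (Matrix.fromBlocks (0 : Matrix (Fin k) (Fin k) ℝ) 0 0 1).submatrix
        ⇑(finSumFinEquiv : Fin k ⊕ Fin k ≃ Fin (k + k)).symm ⇑finSumFinEquiv.symm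
      = (Matrix.fromBlocks (1 : Matrix (Fin k) (Fin k) ℝ) 0 0 0 +
          Matrix.fromBlocks 0 0 0 1).submatrix
        ⇑(finSumFinEquiv : Fin k ⊕ Fin k ≃ Fin (k + k)).symm ⇑finSumFinEquiv.symm := rfl
    _ = 1 := by rw [hsum]; exact Matrix.submatrix_one_equiv _

lemma compress_eMatL {k : ℕ} (x y : Matrix (Fin k) (Fin k) E) :
    compress (eMatL k) (cMat x y) = x := by
  rw [compress_eq, eMatL, Matrix.transpose_submatrix, cMat_eq,
    rmulG_submatrix _ _ _ finSumFinEquiv.symm _,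
    lmulG_submatrix _ _ _ finSumFinEquiv.symm _, Matrix.submatrix_id_id,
    Matrix.transpose_fromRows, Matrix.transpose_one, Matrix.transpose_zero,
    rmulG_fromBlocks_fromRows, lmulG_fromColumns_fromRows]
  simp [rmulG_one, rmulG_zero_right, lmulG_one, lmulG_zero_left]

lemma compress_eMatR {k : ℕ} (x y : Matrix (Fin k) (Fin k) E) :
    compress (eMatR k) (cMat x y) = x := by
  rw [compress_eq, eMatR, Matrix.transpose_submatrix, cMat_eq,
    rmulG_submatrix _ _ _ finSumFinEquiv.symm _,
    lmulG_submatrix _ _ _ finSumFinEquiv.symm _, Matrix.submatrix_id_id,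
    Matrix.transpose_fromRows, Matrix.transpose_one, Matrix.transpose_zero,
    rmulG_fromBlocks_fromRows, lmulG_fromColumns_fromRows]
  simp [rmulG_one, rmulG_zero_right, lmulG_one, lmulG_zero_left]

/-- The real picture `c(a + ib)` of a complex scalar matrix. -/
def gammaM {m k : ℕ} (a b : Matrix (Fin m) (Fin k) ℝ) : Matrix (Fin (m + m)) (Fin (k + k)) ℝ :=
  (Matrix.fromBlocks a (-b) b a).submatrix
    ⇑(finSumFinEquiv : Fin m ⊕ Fin m ≃ Fin (m + m)).symm
    ⇑(finSumFinEquiv : Fin k ⊕ Fin k ≃ Fin (k + k)).symm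

lemma gammaM_iso {m k : ℕ} {a b : Matrix (Fin m) (Fin k) ℝ} (hab : IsCIsometry a b) :
    IsIsometry (gammaM a b) := by
  obtain ⟨hab1, hab2⟩ := hab
  have hba : a.transpose * b = b.transpose * a := sub_eq_zero.mp hab2
  show (gammaM a b).transpose * gammaM a b = 1
  rw [gammaM, Matrix.transpose_submatrix, Matrix.submatrix_mul_equiv]
  rw [Matrix.fromBlocks_transpose, Matrix.fromBlocks_multiply]
  rw [show a.transpose * (-b) + b.transpose * a = 0 by
      rw [Matrix.mul_neg, hba, neg_add_cancel]]
  rw [show (-b).transpose * a + a.transpose * b = 0 by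
      rw [Matrix.transpose_neg, Matrix.neg_mul, hba, neg_add_cancel]]
  rw [show (-b).transpose * (-b) + a.transpose * a = 1 by
      rw [Matrix.transpose_neg, Matrix.neg_mul, Matrix.mul_neg, neg_neg, add_comm]; exact hab1]
  rw [hab1, Matrix.fromBlocks_one, Matrix.submatrix_one_equiv]

lemma compress_gammaM {m k : ℕ} (a b : Matrix (Fin m) (Fin k) ℝ)
    (z w : Matrix (Fin m) (Fin m) E) :
    compress (gammaM a b) (cMat z w) =
      cMat (lmul a.transpose (rmulE z a - rmulE w b) + lmul b.transpose (rmulE w a + rmulE z b))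
        (lmul a.transpose (rmulE w a + rmulE z b) - lmul b.transpose (rmulE z a - rmulE w b)) := by
  rw [compress_eq, gammaM, Matrix.transpose_submatrix, cMat_eq z w, cMat_eq,
    rmulG_submatrix _ _ _ finSumFinEquiv.symm _,
    lmulG_submatrix _ _ _ finSumFinEquiv.symm _]
  apply congrArg (fun M => Matrix.submatrix M _ _)
  simp only [lmul_eq, rmulE_eq]
  rw [Matrix.fromBlocks_transpose, rmulG_fromBlocks]
  rw [show rmulG z a + rmulG (-w) b = rmulG z a - rmulG w b from by
      rw [rmulG_neg_left, ← sub_eq_add_neg]]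
  rw [show rmulG z (-b) + rmulG (-w) a = -(rmulG w a + rmulG z b) from by
      rw [rmulG_neg_right, rmulG_neg_left, ← neg_add, add_comm (rmulG z b) (rmulG w a)]]
  rw [show rmulG w (-b) + rmulG z a = rmulG z a - rmulG w b from by
      rw [rmulG_neg_right, neg_add_eq_sub]]
  rw [lmulG_fromBlocks]
  rw [show lmulG a.transpose (-(rmulG w a + rmulG z b)) +
      lmulG b.transpose (rmulG z a - rmulG w b) =
      -(lmulG a.transpose (rmulG w a + rmulG z b) -
        lmulG b.transpose (rmulG z a - rmulG w b)) from by
      rw [lmulG_neg_right, neg_add_eq_sub]; exact (neg_sub _ _).symm]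
  rw [show lmulG (-b).transpose (rmulG z a - rmulG w b) +
      lmulG a.transpose (rmulG w a + rmulG z b) =
      lmulG a.transpose (rmulG w a + rmulG z b) -
        lmulG b.transpose (rmulG z a - rmulG w b) from by
      rw [Matrix.transpose_neg, lmulG_neg_left, neg_add_eq_sub]]
  rw [show lmulG (-b).transpose (-(rmulG w a + rmulG z b)) +
      lmulG a.transpose (rmulG z a - rmulG w b) =
      lmulG a.transpose (rmulG z a - rmulG w b) +
        lmulG b.transpose (rmulG w a + rmulG z b) from by
      rw [Matrix.transpose_neg, lmulG_neg_left, lmulG_neg_right, neg_neg, add_comm]]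

lemma gammaM_mul_transpose {m k : ℕ} (a b : Matrix (Fin m) (Fin k) ℝ) :
    gammaM a b * (gammaM a b).transpose =
      (Matrix.fromBlocks (a * a.transpose + b * b.transpose)
        (-(b * a.transpose - a * b.transpose))
        (b * a.transpose - a * b.transpose) (a * a.transpose + b * b.transpose)).submatrix
        ⇑(finSumFinEquiv : Fin m ⊕ Fin m ≃ Fin (m + m)).symm ⇑finSumFinEquiv.symm := by
  rw [gammaM, Matrix.transpose_submatrix, Matrix.submatrix_mul_equiv]
  apply congrArg (fun M => Matrix.submatrix M _ _)
  rw [Matrix.fromBlocks_transpose, Matrix.fromBlocks_multiply]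
  rw [show a * a.transpose + -b * (-b).transpose = a * a.transpose + b * b.transpose by
      rw [Matrix.transpose_neg, Matrix.neg_mul, Matrix.mul_neg, neg_neg]]
  rw [show a * b.transpose + -b * a.transpose = -(b * a.transpose - a * b.transpose) by
      rw [Matrix.neg_mul, neg_sub, ← sub_eq_add_neg]]
  rw [show b * a.transpose + a * (-b).transpose = b * a.transpose - a * b.transpose by
      rw [Matrix.transpose_neg, Matrix.mul_neg, ← sub_eq_add_neg]]
  rw [show b * b.transpose + a * a.transpose = a * a.transpose + b * b.transpose from
      add_comm _ _]

lemma CComm_of_RComm {m : ℕ} (P Q : Matrix (Fin m) (Fin m) ℝ) (z w : Matrix (Fin m) (Fin m) E)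
    (h : RComm ((Matrix.fromBlocks P (-Q) Q P).submatrix
      ⇑(finSumFinEquiv : Fin m ⊕ Fin m ≃ Fin (m + m)).symm ⇑finSumFinEquiv.symm) (cMat z w)) :
    (lmul P z - lmul Q w = rmulE z P - rmulE w Q) ∧
    (lmul P w + lmul Q z = rmulE w P + rmulE z Q) := by
  have h' : lmulG (Matrix.fromBlocks P (-Q) Q P) (Matrix.fromBlocks z (-w) w z) =
      rmulG (Matrix.fromBlocks z (-w) w z) (Matrix.fromBlocks P (-Q) Q P) := by
    apply submatrix_equiv_cancel (finSumFinEquiv : Fin m ⊕ Fin m ≃ Fin (m + m)).symm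
      (finSumFinEquiv : Fin m ⊕ Fin m ≃ Fin (m + m)).symm
    rw [← lmulG_submatrix _ _ _ finSumFinEquiv.symm _,
      ← rmulG_submatrix _ _ _ finSumFinEquiv.symm _, ← cMat_eq]
    exact h
  rw [lmulG_fromBlocks, rmulG_fromBlocks] at h'
  have b11 := congrArg Matrix.toBlocks₁₁ h'
  have b21 := congrArg Matrix.toBlocks₂₁ h'
  simp only [Matrix.toBlocks_fromBlocks₁₁] at b11
  simp only [Matrix.toBlocks_fromBlocks₂₁] at b21
  constructor
  · rw [lmul_eq, lmul_eq, rmulE_eq, rmulE_eq, sub_eq_add_neg, sub_eq_add_neg,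
      ← lmulG_neg_left, ← rmulG_neg_left]
    exact b11
  · rw [lmul_eq, lmul_eq, rmulE_eq, rmulE_eq, add_comm (lmulG P w) (lmulG Q z)]
    exact b21

end Aux

/-- For `K` a real compact nc convex set and `x ∈ K`, the point `x`
is maximal in `K` if and only if `x + i0` is maximal in the complexification `K_c`. -/
theorem maximal_iff_complex_maximal
    (E : Type) [AddCommGroup E] [Module ℝ E] [TopologicalSpace E]
    (K : NCConvexSet E) (hK : K.IsCompactSet) {n : ℕ}
    (x : Matrix (Fin n) (Fin n) E) (hx : x ∈ K.level n) :
    IsMaxIn K x ↔ IsCMaxInC K x 0 := by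
  constructor
  · -- forward direction
    intro hmax
    intro m z w a b hzw hab hcc
    have h1 : lmul a.transpose (rmulE z a - rmulE w b) +
        lmul b.transpose (rmulE w a + rmulE z b) = x := congrArg Prod.fst hcc
    have h2 : lmul a.transpose (rmulE w a + rmulE z b) -
        lmul b.transpose (rmulE z a - rmulE w b) = (0 : Matrix (Fin n) (Fin n) E) :=
      congrArg Prod.snd hcc
    have hγiso : IsIsometry (gammaM a b) := gammaM_iso hab
    have hγ' : (gammaM a b).transpose * gammaM a b = 1 := hγiso
    have hγcomp : compress (gammaM a b) (cMat z w) = cMat x 0 := by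
      rw [compress_gammaM, h1, h2]
    have hL : IsIsometry (gammaM a b * eMatL n) := by
      show (gammaM a b * eMatL n).transpose * (gammaM a b * eMatL n) = 1
      rw [Matrix.transpose_mul, Matrix.mul_assoc,
        ← Matrix.mul_assoc ((gammaM a b).transpose), hγ', Matrix.one_mul]
      exact eMatL_iso n
    have hR : IsIsometry (gammaM a b * eMatR n) := by
      show (gammaM a b * eMatR n).transpose * (gammaM a b * eMatR n) = 1
      rw [Matrix.transpose_mul, Matrix.mul_assoc,
        ← Matrix.mul_assoc ((gammaM a b).transpose), hγ', Matrix.one_mul]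
      exact eMatR_iso n
    have hcL : compress (gammaM a b * eMatL n) (cMat z w) = x := by
      rw [compress_compress, hγcomp, compress_eMatL]
    have hcR : compress (gammaM a b * eMatR n) (cMat z w) = x := by
      rw [compress_compress, hγcomp, compress_eMatR]
    have hrL := hmax (cMat z w) (gammaM a b * eMatL n) hzw hL hcL
    have hrR := hmax (cMat z w) (gammaM a b * eMatR n) hzw hR hcR
    have hsum := RComm_add hrL hrR
    have hmul : (gammaM a b * eMatL n) * (gammaM a b * eMatL n).transpose +
        (gammaM a b * eMatR n) * (gammaM a b * eMatR n).transpose =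
        gammaM a b * (gammaM a b).transpose := by
      rw [Matrix.transpose_mul, Matrix.transpose_mul,
        Matrix.mul_assoc (gammaM a b) (eMatL n) _, Matrix.mul_assoc (gammaM a b) (eMatR n) _,
        ← Matrix.mul_add, ← Matrix.mul_assoc (eMatL n), ← Matrix.mul_assoc (eMatR n),
        ← Matrix.add_mul, eMat_sum, Matrix.one_mul]
    rw [hmul, gammaM_mul_transpose] at hsum
    exact CComm_of_RComm _ _ z w hsum
  · -- reverse direction
    intro hc
    intro m y α hy hα hcomp
    have hα' : α.transpose * α = 1 := hα
    have hmem : cMat y (0 : Matrix (Fin m) (Fin m) E) ∈ K.level (m + m) := by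
      have hd : cMat y (0 : Matrix (Fin m) (Fin m) E) = dSum y y := by
        unfold cMat dSum; rw [neg_zero]
      rw [hd]; exact K.dSum_mem hy hy
    have hiso : IsCIsometry α (0 : Matrix (Fin m) (Fin n) ℝ) := by
      constructor
      · simpa using hα'
      · simp
    have hcc : compressC α (0 : Matrix (Fin m) (Fin n) ℝ) y (0 : Matrix (Fin m) (Fin m) E) =
        (x, (0 : Matrix (Fin n) (Fin n) E)) := by
      unfold compressC
      simp only [rmulE_eq, lmul_eq, Matrix.transpose_zero, rmulG_zero_left, rmulG_zero_right,
        lmulG_zero_left, lmulG_zero_right, sub_zero, add_zero, zero_add, zero_sub, neg_zero,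
        Prod.mk.injEq]
      refine ⟨?_, ?_⟩
      · rw [← rmulE_eq, ← lmul_eq]; exact hcomp
      · first | trivial | rfl
    have hres := hc y 0 α 0 hmem hiso hcc
    obtain ⟨hres1, -⟩ := hres
    show lmul (α * α.transpose) y = rmulE y (α * α.transpose)
    have e1 : α * α.transpose +
        (0 : Matrix (Fin m) (Fin n) ℝ) * (0 : Matrix (Fin m) (Fin n) ℝ).transpose =
        α * α.transpose := by simp
    have e2 : (0 : Matrix (Fin m) (Fin n) ℝ) * α.transpose -
        α * (0 : Matrix (Fin m) (Fin n) ℝ).transpose = 0 := by simp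
    rw [e1, e2] at hres1
    have := hres1
    simp only [lmul_eq, rmulE_eq, lmulG_zero_left, rmulG_zero_left, sub_zero] at this
    exact this

end NCC
end
end

section
/- For K a real nc convex set, a point x ∈ K is extreme if and only if it is both pure and maximal. -/
open Matrix Filter Topology
open scoped RealInnerProductSpace ComplexOrder

noncomputable section

namespace NCC

lemma lmul_smul {E : Type*} [AddCommMonoid E] [Module ℝ E] {m n p : ℕ}
    (c : ℝ) (a : Matrix (Fin m) (Fin n) ℝ) (x : Matrix (Fin n) (Fin p) E) :
    lmul (c • a) x = c • lmul a x := by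
  ext i j
  simp [lmul, Finset.smul_sum, smul_smul]

lemma rmulE_smul {E : Type*} [AddCommMonoid E] [Module ℝ E] {m n p : ℕ}
    (c : ℝ) (x : Matrix (Fin m) (Fin n) E) (a : Matrix (Fin n) (Fin p) ℝ) :
    rmulE x (c • a) = c • rmulE x a := by
  ext i j
  simp [rmulE, Finset.smul_sum, smul_smul]

lemma RComm.smul {E : Type*} [AddCommMonoid E] [Module ℝ E] {n : ℕ}
    {p : Matrix (Fin n) (Fin n) ℝ} {x : Matrix (Fin n) (Fin n) E} (c : ℝ)
    (h : RComm p x) : RComm (c • p) x := by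
  unfold RComm at h ⊢
  rw [lmul_smul, rmulE_smul, h]

/-- For `K` a real nc convex set, a point `x ∈ K` is extreme
if and only if it is both pure and maximal. -/
theorem extreme_iff_pure_and_maximal
    (E : Type) [AddCommGroup E] [Module ℝ E]
    (K : NCConvexSet E) {n : ℕ}
    (x : Matrix (Fin n) (Fin n) E) (hx : x ∈ K.level n) :
    IsExtremeIn K x ↔ IsPureIn K x ∧ IsMaxIn K x := by
  constructor
  · intro hext
    constructor
    · intro N d xs αs hmem hne hsum hcomb i
      obtain ⟨c, β, hc, hβ, hαβ, hcβ, -⟩ := hext N d xs αs hmem hne hsum hcomb i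
      exact ⟨c, β, hc, hβ, hαβ, hcβ⟩
    · intro m y α hy hiso hcomp
      rcases n with _ | n
      · have hα : α * α.transpose = 0 := by
          ext i j
          simp [Matrix.mul_apply]
        rw [hα]
        unfold RComm
        ext i j
        simp [lmul, rmulE]
      · have hne : α ≠ 0 := by
          intro h0
          have : α.transpose * α = 0 := by rw [h0]; simp
          rw [hiso] at this
          have := congrFun (congrFun this 0) 0
          simp [Matrix.one_apply] at this
        obtain ⟨c, β, hc, hβ, hαβ, hcβ, hrc⟩ :=
          hext 1 (fun _ => m) (fun _ => y) (fun _ => α)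
            (fun _ => hy) (fun _ => hne)
            (by simpa [IsIsometry] using hiso) (by simpa using hcomp) 0
        have : α * α.transpose = (c * c) • (β * β.transpose) := by
          rw [hαβ]
          ext i j
          simp [Matrix.mul_apply, Finset.mul_sum]
          ring_nf
        rw [this]
        exact RComm.smul _ hrc
  · rintro ⟨hp, hm⟩ N d xs αs hmem hne hsum hcomb i
    obtain ⟨c, β, hc, hβ, hαβ, hcβ⟩ := hp N d xs αs hmem hne hsum hcomb i
    exact ⟨c, β, hc, hβ, hαβ, hcβ, hm (xs i) β (hmem i) hβ hcβ⟩

end NCC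
end
end
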